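/- Let X be an F-space and Y a normed space. If a sequence of continuous linear operators (T_n : X → Y) satisfies the Li-Yorke Chaotic Criterion, then (T_n) admits an irregular vector. -/

import Mathlib

open Filter Topology

/-- A vector `x` is irregular for the sequence of operators `(T n)` if
`liminf ‖T n x‖ = 0` and `limsup ‖T n x‖ = ∞`. -/
def Irregular {X Y : Type*} [AddCommGroup X] [Module ℂ X] [TopologicalSpace X]
    [NormedAddCommGroup Y] [NormedSpace ℂ Y]
    (T : ℕ → X →L[ℂ] Y) (x : X) : Prop :=
  Filter.liminf (fun n => ENNReal.ofReal ‖T n x‖) Filter.atTop = 0 ∧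
  Filter.limsup (fun n => ENNReal.ofReal ‖T n x‖) Filter.atTop = ⊤

/-- The Li-Yorke Chaotic Criterion (LYCC): there exist a set `X₀ ⊆ X` and a strictly
increasing sequence of indices `(n k)` such that `T (n k) x → 0` for every `x ∈ X₀`,
and there is a bounded sequence `(a n)` in the closed linear span of `X₀` such that
`(T n (a n))` is unbounded. -/
def LYCC {X Y : Type*} [AddCommGroup X] [Module ℂ X] [TopologicalSpace X]
    [NormedAddCommGroup Y] [NormedSpace ℂ Y]
    (T : ℕ → X →L[ℂ] Y) : Prop :=
  ∃ (X₀ : Set X) (nk : ℕ → ℕ), StrictMono nk ∧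
    (∀ x ∈ X₀, Filter.Tendsto (fun k => T (nk k) x) Filter.atTop (nhds 0)) ∧
    ∃ a : ℕ → X, (∀ n, a n ∈ closure (Submodule.span ℂ X₀ : Set X)) ∧
      Bornology.IsVonNBounded ℂ (Set.range a) ∧
      ¬ ∃ M : ℝ, ∀ n, ‖T n (a n)‖ ≤ M

/-- If `(T n)` satisfies the Li-Yorke Chaotic Criterion, then it admits
an irregular vector. -/
theorem exists_irregular_of_LYCC
    {X Y : Type*} [AddCommGroup X] [Module ℂ X] [MetricSpace X] [CompleteSpace X]
    [IsTopologicalAddGroup X] [ContinuousSMul ℂ X]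
    [NormedAddCommGroup Y] [NormedSpace ℂ Y]
    (T : ℕ → X →L[ℂ] Y) (h : LYCC T) :
    ∃ x : X, Irregular T x := by
  unfold Irregular
  obtain ⟨X₀, nk, hnk, h0, a, haZ, hbd, hub⟩ := h
  set Zs : Submodule ℂ X := (Submodule.span ℂ X₀).topologicalClosure with hZsdef
  have hZcoe : (Zs : Set X) = closure (Submodule.span ℂ X₀ : Set X) :=
    Submodule.topologicalClosure_coe _
  haveI : CompleteSpace Zs := by
    have : IsClosed (Zs : Set X) := Submodule.isClosed_topologicalClosure _
    exact this.completeSpace_coe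
  -- tendsto to 0 on the span
  have hspan : ∀ x ∈ Submodule.span ℂ X₀, Tendsto (fun k => T (nk k) x) atTop (𝓝 0) := by
    intro x hx
    induction hx using Submodule.span_induction with
    | mem x hx => exact h0 x hx
    | zero => simpa using tendsto_const_nhds
    | add x y _ _ hx hy => simpa using hx.add hy
    | smul c x _ hx => simpa using hx.const_smul c
  -- the dense set of span points
  have hdense : Dense {x : Zs | (x : X) ∈ (Submodule.span ℂ X₀ : Set X)} := by
    rw [dense_iff_inter_open]
    rintro U hU ⟨z, hzU⟩
    obtain ⟨V, hV, rfl⟩ := isOpen_induced_iff.mp hU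
    have hz : (z : X) ∈ closure (Submodule.span ℂ X₀ : Set X) := by
      rw [← hZcoe]; exact z.2
    rcases mem_closure_iff.mp hz V hV hzU with ⟨y, hyV, hy⟩
    exact ⟨⟨y, Submodule.le_topologicalClosure _ hy⟩, hyV, hy⟩
  -- the open sets
  set G : ℕ ⊕ ℕ × ℕ → Set Zs := fun i =>
    Sum.rec (fun M => {x : Zs | ∃ n, (M : ℝ) < ‖T n (x : X)‖})
      (fun p => {x : Zs | ∃ k, p.2 ≤ k ∧ ‖T (nk k) (x : X)‖ < 1 / (p.1 + 1)}) i with hGdef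
  have hGopen : ∀ i, IsOpen (G i) := by
    rintro (M | ⟨m, N⟩)
    · have : G (Sum.inl M) = ⋃ n, {x : Zs | (M : ℝ) < ‖T n (x : X)‖} := by
        ext x; simp [hGdef]
      rw [this]
      exact isOpen_iUnion fun n =>
        isOpen_lt continuous_const (((T n).continuous.comp continuous_subtype_val).norm)
    · have : G (Sum.inr (m, N)) =
          ⋃ k, ⋃ (_ : N ≤ k), {x : Zs | ‖T (nk k) (x : X)‖ < 1 / (m + 1)} := by
        ext x; simp [hGdef]
      rw [this]
      exact isOpen_iUnion fun k => isOpen_iUnion fun _ =>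
        isOpen_lt (((T (nk k)).continuous.comp continuous_subtype_val).norm) continuous_const
  have hGdense : ∀ i, Dense (G i) := by
    rintro (M | ⟨m, N⟩)
    · -- density of the unboundedness sets
      rw [Metric.dense_iff]
      intro z r hr
      by_contra hcon
      rw [Set.not_nonempty_iff_eq_empty] at hcon
      have hball : ∀ y : Zs, dist y z < r → ∀ n, ‖T n (y : X)‖ ≤ (M : ℝ) := by
        intro y hy n
        by_contra hn
        push_neg at hn
        have : y ∈ Metric.ball z r ∩ G (Sum.inl M) := ⟨hy, ⟨n, hn⟩⟩
        rw [hcon] at this; exact this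
      -- a neighborhood of 0
      have htend : Tendsto (fun w : X => (z : X) + w) (𝓝 0) (𝓝 (z : X)) := by
        simpa using (continuous_add_left (z : X)).tendsto (0 : X)
      have hW : (fun w : X => (z : X) + w) ⁻¹' (Metric.ball (z : X) r) ∈ 𝓝 (0 : X) :=
        htend (Metric.ball_mem_nhds _ hr)
      obtain ⟨c, hcW, hc1⟩ := ((hbd hW).and (eventually_cobounded_le_norm 1)).exists
      have hc0 : c ≠ 0 := by
        intro hc; rw [hc, norm_zero] at hc1; linarith
      refine hub ⟨2 * M * ‖c‖, fun n => ?_⟩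
      obtain ⟨w, hwW, hwa'⟩ := hcW (Set.mem_range_self n)
      have hwa : c • w = a n := hwa'
      have hwZ : w ∈ Zs := by
        have haZ' : a n ∈ Zs := by
          have := haZ n; rw [← hZcoe] at this; exact this
        have : w = c⁻¹ • a n := by
          rw [← hwa, smul_smul, inv_mul_cancel₀ hc0, one_smul]
        rw [this]; exact Zs.smul_mem _ haZ'
      set y : Zs := ⟨(z : X) + w, Zs.add_mem z.2 hwZ⟩ with hydef
      have hdy : dist y z < r := by
        have : ((z : X) + w) ∈ Metric.ball (z : X) r := hwW
        simpa [Subtype.dist_eq, hydef] using this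
      have h1 : ‖T n ((z : X) + w)‖ ≤ (M : ℝ) := hball y hdy n
      have h2 : ‖T n (z : X)‖ ≤ (M : ℝ) := hball z (by simpa using hr) n
      have h3 : ‖T n w‖ ≤ 2 * M := by
        have : T n w = T n ((z : X) + w) - T n (z : X) := by simp
        rw [this]
        calc ‖T n ((z : X) + w) - T n (z : X)‖ ≤ ‖T n ((z : X) + w)‖ + ‖T n (z : X)‖ :=
              norm_sub_le _ _
          _ ≤ 2 * M := by linarith
      calc ‖T n (a n)‖ = ‖T n (c • w)‖ := by rw [hwa]
        _ = ‖c‖ * ‖T n w‖ := by rw [map_smul, norm_smul]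
        _ ≤ ‖c‖ * (2 * M) := by
            exact mul_le_mul_of_nonneg_left h3 (norm_nonneg c)
        _ = 2 * M * ‖c‖ := by ring
    · -- density of the small sets
      refine hdense.mono ?_
      intro x hx
      have := hspan x hx
      have hpos : (0 : ℝ) < 1 / (m + 1) := by positivity
      have hn0 : Tendsto (fun k => ‖T (nk k) (x : X)‖) atTop (𝓝 0) := by
        simpa using this.norm
      have hev : ∀ᶠ k in atTop, ‖T (nk k) (x : X)‖ < 1 / (m + 1) :=
        hn0.eventually (eventually_lt_nhds hpos)
      obtain ⟨k₀, hk₀⟩ := hev.exists_forall_of_atTop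
      exact ⟨max N k₀, le_max_left _ _, hk₀ _ (le_max_right _ _)⟩
  haveI : Nonempty Zs := ⟨0⟩
  obtain ⟨x, hx⟩ := (dense_iInter_of_isOpen hGopen hGdense).nonempty
  simp only [Set.mem_iInter] at hx
  have hxU : ∀ M : ℕ, ∃ n, (M : ℝ) < ‖T n (x : X)‖ := fun M => hx (Sum.inl M)
  have hxV : ∀ m N : ℕ, ∃ k, N ≤ k ∧ ‖T (nk k) (x : X)‖ < 1 / (m + 1) :=
    fun m N => hx (Sum.inr (m, N))
  refine ⟨(x : X), ?_, ?_⟩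
  · -- liminf = 0
    refine le_antisymm ?_ (zero_le (a := _))
    refine ENNReal.le_of_forall_pos_le_add fun ε hε _ => ?_
    rw [zero_add]
    obtain ⟨m, hm⟩ := exists_nat_one_div_lt (show (0:ℝ) < ε from hε)
    have hfreq : ∃ᶠ n in atTop, ENNReal.ofReal ‖T n (x : X)‖ ≤ (ε : ENNReal) := by
      rw [frequently_atTop]
      intro N
      obtain ⟨k, hkN, hk⟩ := hxV m N
      refine ⟨nk k, le_trans hkN (hnk.le_apply), ?_⟩
      calc ENNReal.ofReal ‖T (nk k) (x : X)‖ ≤ ENNReal.ofReal (1 / (m + 1)) :=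
            ENNReal.ofReal_le_ofReal hk.le
        _ ≤ ENNReal.ofReal (ε : ℝ) := ENNReal.ofReal_le_ofReal hm.le
        _ = (ε : ENNReal) := ENNReal.ofReal_coe_nnreal
    exact Filter.liminf_le_of_frequently_le' hfreq
  · -- limsup = ⊤
    refine le_antisymm le_top ?_
    rw [← ENNReal.iSup_natCast]
    refine iSup_le fun M => ?_
    refine Filter.le_limsup_of_frequently_le' ?_
    rw [frequently_atTop]
    intro N
    set C := (Finset.range (N + 1)).sup' (by simp) (fun i => ‖T i (x : X)‖) with hCdef
    obtain ⟨M', hM'⟩ := exists_nat_gt (max (M : ℝ) C)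
    obtain ⟨n, hn⟩ := hxU M'
    have hnN : N ≤ n := by
      by_contra hlt
      push_neg at hlt
      have : ‖T n (x : X)‖ ≤ C :=
        Finset.le_sup' (fun i => ‖T i (x : X)‖) (Finset.mem_range.mpr (by omega))
      have := lt_of_le_of_lt (le_max_right (M : ℝ) C) hM'
      linarith
    refine ⟨n, hnN, ?_⟩
    have : (M : ℝ) ≤ ‖T n (x : X)‖ := by
      have := lt_of_le_of_lt (le_max_left (M : ℝ) C) hM'
      linarith
    calc (M : ENNReal) = ENNReal.ofReal (M : ℝ) := by
          rw [ENNReal.ofReal_natCast]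
      _ ≤ ENNReal.ofReal ‖T n (x : X)‖ := ENNReal.ofReal_le_ofReal this
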